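/- Let (X, μ) be a measure space, N ≥ 1 an integer, and θ > 1 a real number. For all F, G ∈ L^θ(X, μ; ℝ^N), the function x ↦ (|F(x)|^{θ−2}F(x) − |G(x)|^{θ−2}G(x)) · (F(x) − G(x)) is integrable and ∫_X (|F|^{θ−2}F − |G|^{θ−2}G) · (F − G) dμ ≥ ( ‖F‖_θ^{θ−1} − ‖G‖_θ^{θ−1} ) ( ‖F‖_θ − ‖G‖_θ ) ≥ 0, where · is the Euclidean inner product on ℝ^N. -/

import Mathlib

open MeasureTheory
open scoped RealInnerProductSpace

/-- Monotonicity-type inequality: for `F, G ∈ L^θ(X, μ; ℝ^N)`, the integrand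
`(|F|^{θ-2}F - |G|^{θ-2}G) · (F - G)` is integrable and its integral is bounded below by
`(‖F‖_θ^{θ-1} - ‖G‖_θ^{θ-1})(‖F‖_θ - ‖G‖_θ) ≥ 0`. -/
theorem stmt_5 {X : Type*} [MeasurableSpace X] (μ : Measure X)
    (N : ℕ) (hN : 1 ≤ N) (θ : ℝ) (hθ : 1 < θ) [Fact (1 ≤ ENNReal.ofReal θ)]
    (F G : Lp (EuclideanSpace ℝ (Fin N)) (ENNReal.ofReal θ) μ) :
    Integrable
        (fun x => ⟪(‖F x‖ ^ (θ - 2)) • F x - (‖G x‖ ^ (θ - 2)) • G x, F x - G x⟫) μ ∧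
      (‖F‖ ^ (θ - 1) - ‖G‖ ^ (θ - 1)) * (‖F‖ - ‖G‖)
        ≤ ∫ x, ⟪(‖F x‖ ^ (θ - 2)) • F x - (‖G x‖ ^ (θ - 2)) • G x, F x - G x⟫ ∂μ ∧
      0 ≤ (‖F‖ ^ (θ - 1) - ‖G‖ ^ (θ - 1)) * (‖F‖ - ‖G‖) := by
  have hθ0 : (0:ℝ) < θ := by linarith
  have hθ1 : (0:ℝ) < θ - 1 := by linarith
  have hp0 : ENNReal.ofReal θ ≠ 0 := by
    simp only [ne_eq, ENNReal.ofReal_eq_zero, not_le]; linarith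
  have hptop : ENNReal.ofReal θ ≠ ⊤ := ENNReal.ofReal_ne_top
  have hpt : (ENNReal.ofReal θ).toReal = θ := ENNReal.toReal_ofReal hθ0.le
  have hF : MemLp (F : X → EuclideanSpace ℝ (Fin N)) (ENNReal.ofReal θ) μ := Lp.memLp F
  have hG : MemLp (G : X → EuclideanSpace ℝ (Fin N)) (ENNReal.ofReal θ) μ := Lp.memLp G
  -- rpow algebra helpers
  have key1 : ∀ t : ℝ, 0 ≤ t → t ^ (θ - 2) * t = t ^ (θ - 1) := by
    intro t ht
    have h := Real.rpow_add' ht (show (θ - 2) + 1 ≠ 0 by intro h; linarith)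
    rw [show (θ - 2) + 1 = θ - 1 by ring, Real.rpow_one] at h
    exact h.symm
  have key2 : ∀ t : ℝ, 0 ≤ t → t ^ (θ - 1) * t = t ^ θ := by
    intro t ht
    have h := Real.rpow_add' ht (show (θ - 1) + 1 ≠ 0 by intro h; linarith)
    rw [show (θ - 1) + 1 = θ by ring, Real.rpow_one] at h
    exact h.symm
  -- integrability of ‖F‖^θ, ‖G‖^θ
  have hFθ : Integrable (fun x => ‖F x‖ ^ θ) μ := by
    have h := hF.integrable_norm_rpow hp0 hptop
    rwa [hpt] at h
  have hGθ : Integrable (fun x => ‖G x‖ ^ θ) μ := by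
    have h := hG.integrable_norm_rpow hp0 hptop
    rwa [hpt] at h
  -- conjugate exponents
  have hconj : (θ / (θ - 1)).HolderConjugate θ :=
    (Real.HolderConjugate.conjExponent hθ).symm
  -- MemLp of ‖F‖^(θ-1) with exponent θ/(θ-1)
  have hdiv : ENNReal.ofReal (θ / (θ - 1)) = ENNReal.ofReal θ / ENNReal.ofReal (θ - 1) := by
    rw [ENNReal.ofReal_div_of_pos hθ1]
  have hFpow : MemLp (fun x => ‖F x‖ ^ (θ - 1)) (ENNReal.ofReal (θ / (θ - 1))) μ := by
    have h := hF.norm_rpow_div (ENNReal.ofReal (θ - 1))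
    rwa [ENNReal.toReal_ofReal hθ1.le, ← hdiv] at h
  have hGpow : MemLp (fun x => ‖G x‖ ^ (θ - 1)) (ENNReal.ofReal (θ / (θ - 1))) μ := by
    have h := hG.norm_rpow_div (ENNReal.ofReal (θ - 1))
    rwa [ENNReal.toReal_ofReal hθ1.le, ← hdiv] at h
  -- cross-term integrability via Young's inequality
  have hmeasF : AEStronglyMeasurable (F : X → EuclideanSpace ℝ (Fin N)) μ :=
    Lp.aestronglyMeasurable F
  have hmeasG : AEStronglyMeasurable (G : X → EuclideanSpace ℝ (Fin N)) μ :=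
    Lp.aestronglyMeasurable G
  have hcross : ∀ (f g : X → EuclideanSpace ℝ (Fin N)),
      AEStronglyMeasurable f μ → AEStronglyMeasurable g μ →
      Integrable (fun x => ‖f x‖ ^ θ) μ → Integrable (fun x => ‖g x‖ ^ θ) μ →
      Integrable (fun x => ‖f x‖ ^ (θ - 1) * ‖g x‖) μ := by
    intro f g hf hg hfθ hgθ
    refine Integrable.mono'
      ((hfθ.div_const (θ / (θ - 1))).add (hgθ.div_const θ)) ?_ ?_
    · exact ((hf.norm.aemeasurable.pow_const (θ - 1)).mul
        hg.norm.aemeasurable).aestronglyMeasurable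
    · refine Filter.Eventually.of_forall fun x => ?_
      have h1 : 0 ≤ ‖f x‖ ^ (θ - 1) * ‖g x‖ :=
        mul_nonneg (Real.rpow_nonneg (norm_nonneg _) _) (norm_nonneg _)
      rw [Real.norm_of_nonneg h1]
      have hy := Real.young_inequality_of_nonneg
        (Real.rpow_nonneg (norm_nonneg (f x)) (θ - 1)) (norm_nonneg (g x)) hconj
      have hpow : (‖f x‖ ^ (θ - 1)) ^ (θ / (θ - 1)) = ‖f x‖ ^ θ := by
        rw [← Real.rpow_mul (norm_nonneg _)]
        congr 1
        field_simp
      rwa [hpow] at hy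
  have hC1 : Integrable (fun x => ‖F x‖ ^ (θ - 1) * ‖G x‖) μ :=
    hcross _ _ hmeasF hmeasG hFθ hGθ
  have hC2 : Integrable (fun x => ‖G x‖ ^ (θ - 1) * ‖F x‖) μ :=
    hcross _ _ hmeasG hmeasF hGθ hFθ
  -- measurability of the main integrand
  have hmeas : AEStronglyMeasurable
      (fun x => ⟪(‖F x‖ ^ (θ - 2)) • F x - (‖G x‖ ^ (θ - 2)) • G x, F x - G x⟫) μ := by
    refine AEStronglyMeasurable.inner ?_ (hmeasF.sub hmeasG)
    refine AEStronglyMeasurable.sub ?_ ?_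
    · exact ((hmeasF.norm.aemeasurable.pow_const (θ - 2)).aestronglyMeasurable).smul hmeasF
    · exact ((hmeasG.norm.aemeasurable.pow_const (θ - 2)).aestronglyMeasurable).smul hmeasG
  -- pointwise expansion
  have hexp : ∀ x, ⟪(‖F x‖ ^ (θ - 2)) • F x - (‖G x‖ ^ (θ - 2)) • G x, F x - G x⟫
      = ‖F x‖ ^ (θ - 2) * ⟪F x, F x⟫ - ‖F x‖ ^ (θ - 2) * ⟪F x, G x⟫
        - ‖G x‖ ^ (θ - 2) * ⟪G x, F x⟫ + ‖G x‖ ^ (θ - 2) * ⟪G x, G x⟫ := by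
    intro x
    simp only [inner_sub_left, inner_sub_right, real_inner_smul_left]
    ring
  -- pointwise lower and upper bounds
  have hlow : ∀ x, ‖F x‖ ^ θ + ‖G x‖ ^ θ - ‖F x‖ ^ (θ - 1) * ‖G x‖ - ‖G x‖ ^ (θ - 1) * ‖F x‖
      ≤ ⟪(‖F x‖ ^ (θ - 2)) • F x - (‖G x‖ ^ (θ - 2)) • G x, F x - G x⟫ := by
    intro x
    rw [hexp x]
    set a := ‖F x‖
    set b := ‖G x‖
    have ha : 0 ≤ a := norm_nonneg _
    have hb : 0 ≤ b := norm_nonneg _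
    have hFF : ⟪F x, F x⟫ = a * a := real_inner_self_eq_norm_mul_norm (F x)
    have hGG : ⟪G x, G x⟫ = b * b := real_inner_self_eq_norm_mul_norm (G x)
    have hc : (0:ℝ) ≤ a ^ (θ - 2) := Real.rpow_nonneg ha _
    have hd : (0:ℝ) ≤ b ^ (θ - 2) := Real.rpow_nonneg hb _
    have hFG : ⟪F x, G x⟫ ≤ a * b := real_inner_le_norm (F x) (G x)
    have hGF : ⟪G x, F x⟫ ≤ b * a := real_inner_le_norm (G x) (F x)
    have e1 : a ^ (θ - 2) * (a * a) = a ^ θ := by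
      rw [← mul_assoc, key1 a ha, key2 a ha]
    have e2 : b ^ (θ - 2) * (b * b) = b ^ θ := by
      rw [← mul_assoc, key1 b hb, key2 b hb]
    have e3 : a ^ (θ - 2) * (a * b) = a ^ (θ - 1) * b := by
      rw [← mul_assoc, key1 a ha]
    have e4 : b ^ (θ - 2) * (b * a) = b ^ (θ - 1) * a := by
      rw [← mul_assoc, key1 b hb]
    have h1 : a ^ (θ - 2) * ⟪F x, G x⟫ ≤ a ^ (θ - 1) * b := by
      calc a ^ (θ - 2) * ⟪F x, G x⟫ ≤ a ^ (θ - 2) * (a * b) :=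
            mul_le_mul_of_nonneg_left hFG hc
        _ = a ^ (θ - 1) * b := e3
    have h2 : b ^ (θ - 2) * ⟪G x, F x⟫ ≤ b ^ (θ - 1) * a := by
      calc b ^ (θ - 2) * ⟪G x, F x⟫ ≤ b ^ (θ - 2) * (b * a) :=
            mul_le_mul_of_nonneg_left hGF hd
        _ = b ^ (θ - 1) * a := e4
    rw [hFF, hGG, e1, e2]
    linarith
  have hup : ∀ x, ‖⟪(‖F x‖ ^ (θ - 2)) • F x - (‖G x‖ ^ (θ - 2)) • G x, F x - G x⟫‖
      ≤ ‖F x‖ ^ θ + ‖G x‖ ^ θ + ‖F x‖ ^ (θ - 1) * ‖G x‖ + ‖G x‖ ^ (θ - 1) * ‖F x‖ := by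
    intro x
    rw [hexp x]
    set a := ‖F x‖
    set b := ‖G x‖
    have ha : 0 ≤ a := norm_nonneg _
    have hb : 0 ≤ b := norm_nonneg _
    have hc : (0:ℝ) ≤ a ^ (θ - 2) := Real.rpow_nonneg ha _
    have hd : (0:ℝ) ≤ b ^ (θ - 2) := Real.rpow_nonneg hb _
    have hFF : ⟪F x, F x⟫ = a * a := real_inner_self_eq_norm_mul_norm (F x)
    have hGG : ⟪G x, G x⟫ = b * b := real_inner_self_eq_norm_mul_norm (G x)
    have hFG : |⟪F x, G x⟫| ≤ a * b := abs_real_inner_le_norm (F x) (G x)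
    have hGF : |⟪G x, F x⟫| ≤ b * a := abs_real_inner_le_norm (G x) (F x)
    have e1 : a ^ (θ - 2) * (a * a) = a ^ θ := by
      rw [← mul_assoc, key1 a ha, key2 a ha]
    have e2 : b ^ (θ - 2) * (b * b) = b ^ θ := by
      rw [← mul_assoc, key1 b hb, key2 b hb]
    have e3 : a ^ (θ - 2) * (a * b) = a ^ (θ - 1) * b := by
      rw [← mul_assoc, key1 a ha]
    have e4 : b ^ (θ - 2) * (b * a) = b ^ (θ - 1) * a := by
      rw [← mul_assoc, key1 b hb]
    rw [Real.norm_eq_abs]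
    have habs : |a ^ (θ - 2) * ⟪F x, F x⟫ - a ^ (θ - 2) * ⟪F x, G x⟫
        - b ^ (θ - 2) * ⟪G x, F x⟫ + b ^ (θ - 2) * ⟪G x, G x⟫|
        ≤ |a ^ (θ - 2) * ⟪F x, F x⟫| + |a ^ (θ - 2) * ⟪F x, G x⟫|
          + |b ^ (θ - 2) * ⟪G x, F x⟫| + |b ^ (θ - 2) * ⟪G x, G x⟫| := by
      calc _ ≤ |a ^ (θ - 2) * ⟪F x, F x⟫ - a ^ (θ - 2) * ⟪F x, G x⟫
            - b ^ (θ - 2) * ⟪G x, F x⟫| + |b ^ (θ - 2) * ⟪G x, G x⟫| := abs_add_le _ _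
        _ ≤ |a ^ (θ - 2) * ⟪F x, F x⟫ - a ^ (θ - 2) * ⟪F x, G x⟫|
            + |b ^ (θ - 2) * ⟪G x, F x⟫| + |b ^ (θ - 2) * ⟪G x, G x⟫| := by
              gcongr; exact abs_sub _ _
        _ ≤ _ := by gcongr; exact abs_sub _ _
    refine habs.trans ?_
    have t1 : |a ^ (θ - 2) * ⟪F x, F x⟫| ≤ a ^ θ := by
      rw [abs_mul, abs_of_nonneg hc, hFF, abs_of_nonneg (mul_nonneg ha ha), e1]
    have t2 : |a ^ (θ - 2) * ⟪F x, G x⟫| ≤ a ^ (θ - 1) * b := by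
      rw [abs_mul, abs_of_nonneg hc, ← e3]
      exact mul_le_mul_of_nonneg_left hFG hc
    have t3 : |b ^ (θ - 2) * ⟪G x, F x⟫| ≤ b ^ (θ - 1) * a := by
      rw [abs_mul, abs_of_nonneg hd, ← e4]
      exact mul_le_mul_of_nonneg_left hGF hd
    have t4 : |b ^ (θ - 2) * ⟪G x, G x⟫| ≤ b ^ θ := by
      rw [abs_mul, abs_of_nonneg hd, hGG, abs_of_nonneg (mul_nonneg hb hb), e2]
    linarith
  -- integrability of the main integrand
  have hInt : Integrable
      (fun x => ⟪(‖F x‖ ^ (θ - 2)) • F x - (‖G x‖ ^ (θ - 2)) • G x, F x - G x⟫) μ := by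
    refine Integrable.mono' (((hFθ.add hGθ).add hC1).add hC2) hmeas ?_
    exact Filter.Eventually.of_forall fun x => by
      simpa [add_assoc] using hup x
  -- Lp norms as integrals
  have hIAnn : 0 ≤ ∫ x, ‖F x‖ ^ θ ∂μ :=
    integral_nonneg fun x => Real.rpow_nonneg (norm_nonneg _) _
  have hIBnn : 0 ≤ ∫ x, ‖G x‖ ^ θ ∂μ :=
    integral_nonneg fun x => Real.rpow_nonneg (norm_nonneg _) _
  have hAeq : ‖F‖ = (∫ x, ‖F x‖ ^ θ ∂μ) ^ θ⁻¹ := by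
    rw [Lp.norm_def, hF.eLpNorm_eq_integral_rpow_norm hp0 hptop, hpt,
      ENNReal.toReal_ofReal (Real.rpow_nonneg hIAnn _)]
  have hBeq : ‖G‖ = (∫ x, ‖G x‖ ^ θ ∂μ) ^ θ⁻¹ := by
    rw [Lp.norm_def, hG.eLpNorm_eq_integral_rpow_norm hp0 hptop, hpt,
      ENNReal.toReal_ofReal (Real.rpow_nonneg hIBnn _)]
  have hIA : ∫ x, ‖F x‖ ^ θ ∂μ = ‖F‖ ^ θ := by
    rw [hAeq, ← Real.rpow_mul hIAnn, inv_mul_cancel₀ hθ0.ne', Real.rpow_one]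
  have hIB : ∫ x, ‖G x‖ ^ θ ∂μ = ‖G‖ ^ θ := by
    rw [hBeq, ← Real.rpow_mul hIBnn, inv_mul_cancel₀ hθ0.ne', Real.rpow_one]
  -- Hölder bounds on cross terms
  have hA0 : (0:ℝ) ≤ ‖F‖ := norm_nonneg _
  have hB0 : (0:ℝ) ≤ ‖G‖ := norm_nonneg _
  have hHolder : ∀ (f g : X → EuclideanSpace ℝ (Fin N)),
      MemLp (fun x => ‖f x‖ ^ (θ - 1)) (ENNReal.ofReal (θ / (θ - 1))) μ →
      MemLp g (ENNReal.ofReal θ) μ →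
      (∫ x, ‖f x‖ ^ θ ∂μ) = (∫ x, ‖f x‖ ^ θ ∂μ) →
      ∫ x, ‖f x‖ ^ (θ - 1) * ‖g x‖ ∂μ
        ≤ (∫ x, ‖f x‖ ^ θ ∂μ) ^ ((θ - 1) / θ) * (∫ x, ‖g x‖ ^ θ ∂μ) ^ (1 / θ) := by
    intro f g hfp hgp _
    have h := integral_mul_le_Lp_mul_Lq_of_nonneg hconj
      (Filter.Eventually.of_forall fun x => Real.rpow_nonneg (norm_nonneg (f x)) _)
      (Filter.Eventually.of_forall fun x => norm_nonneg (g x))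
      hfp hgp.norm
    have hpoweq : ∀ x : X, (‖f x‖ ^ (θ - 1)) ^ (θ / (θ - 1)) = ‖f x‖ ^ θ := by
      intro x
      rw [← Real.rpow_mul (norm_nonneg _)]
      congr 1
      field_simp
    rw [show (1 / (θ / (θ - 1))) = (θ - 1) / θ by
      rw [one_div_div]] at h
    calc ∫ x, ‖f x‖ ^ (θ - 1) * ‖g x‖ ∂μ
        ≤ (∫ x, (‖f x‖ ^ (θ - 1)) ^ (θ / (θ - 1)) ∂μ) ^ ((θ - 1) / θ)
          * (∫ x, ‖g x‖ ^ θ ∂μ) ^ (1 / θ) := h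
      _ = (∫ x, ‖f x‖ ^ θ ∂μ) ^ ((θ - 1) / θ) * (∫ x, ‖g x‖ ^ θ ∂μ) ^ (1 / θ) := by
          congr 1
          congr 1
          exact integral_congr_ae (Filter.Eventually.of_forall fun x => hpoweq x)
  have hrw : ∀ (f : Lp (EuclideanSpace ℝ (Fin N)) (ENNReal.ofReal θ) μ),
      (∫ x, ‖f x‖ ^ θ ∂μ = ‖f‖ ^ θ) →
      (∫ x, ‖f x‖ ^ θ ∂μ) ^ ((θ - 1) / θ) = ‖f‖ ^ (θ - 1) := by
    intro f hf
    rw [hf, ← Real.rpow_mul (norm_nonneg f)]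
    congr 1
    field_simp
  have hrw2 : ∀ (f : Lp (EuclideanSpace ℝ (Fin N)) (ENNReal.ofReal θ) μ),
      (∫ x, ‖f x‖ ^ θ ∂μ = ‖f‖ ^ θ) →
      (∫ x, ‖f x‖ ^ θ ∂μ) ^ (1 / θ) = ‖f‖ := by
    intro f hf
    rw [hf, ← Real.rpow_mul (norm_nonneg f), mul_one_div, div_self hθ0.ne',
      Real.rpow_one]
  have hHold1 : ∫ x, ‖F x‖ ^ (θ - 1) * ‖G x‖ ∂μ ≤ ‖F‖ ^ (θ - 1) * ‖G‖ := by
    have h := hHolder _ _ hFpow hG rfl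
    rwa [hrw F hIA, hrw2 G hIB] at h
  have hHold2 : ∫ x, ‖G x‖ ^ (θ - 1) * ‖F x‖ ∂μ ≤ ‖G‖ ^ (θ - 1) * ‖F‖ := by
    have h := hHolder _ _ hGpow hF rfl
    rwa [hrw G hIB, hrw2 F hIA] at h
  -- main integral inequality
  have hmain : (‖F‖ ^ (θ - 1) - ‖G‖ ^ (θ - 1)) * (‖F‖ - ‖G‖)
      ≤ ∫ x, ⟪(‖F x‖ ^ (θ - 2)) • F x - (‖G x‖ ^ (θ - 2)) • G x, F x - G x⟫ ∂μ := by
    have hIlow : Integrable (fun x =>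
        ‖F x‖ ^ θ + ‖G x‖ ^ θ - ‖F x‖ ^ (θ - 1) * ‖G x‖ - ‖G x‖ ^ (θ - 1) * ‖F x‖) μ :=
      ((hFθ.add hGθ).sub hC1).sub hC2
    have hmono : ∫ x, (‖F x‖ ^ θ + ‖G x‖ ^ θ - ‖F x‖ ^ (θ - 1) * ‖G x‖
          - ‖G x‖ ^ (θ - 1) * ‖F x‖) ∂μ
        ≤ ∫ x, ⟪(‖F x‖ ^ (θ - 2)) • F x - (‖G x‖ ^ (θ - 2)) • G x, F x - G x⟫ ∂μ :=
      integral_mono hIlow hInt hlow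
    have hsplit : ∫ x, (‖F x‖ ^ θ + ‖G x‖ ^ θ - ‖F x‖ ^ (θ - 1) * ‖G x‖
          - ‖G x‖ ^ (θ - 1) * ‖F x‖) ∂μ
        = (∫ x, ‖F x‖ ^ θ ∂μ) + (∫ x, ‖G x‖ ^ θ ∂μ)
          - (∫ x, ‖F x‖ ^ (θ - 1) * ‖G x‖ ∂μ) - (∫ x, ‖G x‖ ^ (θ - 1) * ‖F x‖ ∂μ) := by
      have e1 : ∫ x, (‖F x‖ ^ θ + ‖G x‖ ^ θ - ‖F x‖ ^ (θ - 1) * ‖G x‖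
            - ‖G x‖ ^ (θ - 1) * ‖F x‖) ∂μ
          = (∫ x, (‖F x‖ ^ θ + ‖G x‖ ^ θ - ‖F x‖ ^ (θ - 1) * ‖G x‖) ∂μ)
            - ∫ x, ‖G x‖ ^ (θ - 1) * ‖F x‖ ∂μ :=
        integral_sub ((hFθ.add hGθ).sub hC1) hC2
      have e2 : ∫ x, (‖F x‖ ^ θ + ‖G x‖ ^ θ - ‖F x‖ ^ (θ - 1) * ‖G x‖) ∂μ
          = (∫ x, (‖F x‖ ^ θ + ‖G x‖ ^ θ) ∂μ) - ∫ x, ‖F x‖ ^ (θ - 1) * ‖G x‖ ∂μ :=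
        integral_sub (hFθ.add hGθ) hC1
      have e3 : ∫ x, (‖F x‖ ^ θ + ‖G x‖ ^ θ) ∂μ
          = (∫ x, ‖F x‖ ^ θ ∂μ) + ∫ x, ‖G x‖ ^ θ ∂μ :=
        integral_add hFθ hGθ
      rw [e1, e2, e3]
    have hAB : ‖F‖ ^ θ + ‖G‖ ^ θ - ‖F‖ ^ (θ - 1) * ‖G‖ - ‖G‖ ^ (θ - 1) * ‖F‖
        = (‖F‖ ^ (θ - 1) - ‖G‖ ^ (θ - 1)) * (‖F‖ - ‖G‖) := by
      rw [← key2 _ hA0, ← key2 _ hB0]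
      ring
    rw [← hAB]
    refine le_trans ?_ hmono
    rw [hsplit, hIA, hIB]
    linarith
  refine ⟨hInt, hmain, ?_⟩
  rcases le_total ‖F‖ ‖G‖ with h | h
  · have h1 : ‖F‖ ^ (θ - 1) ≤ ‖G‖ ^ (θ - 1) := Real.rpow_le_rpow hA0 h hθ1.le
    nlinarith
  · have h1 : ‖G‖ ^ (θ - 1) ≤ ‖F‖ ^ (θ - 1) := Real.rpow_le_rpow hB0 h hθ1.le
    nlinarith
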